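/- Let M = (E, 𝒞) be an oriented matroid, Y₀ = (Y̲₀, ∅) a positive circuit of M, and e ∈ E with e ∉ Y̲₀. If there exists a signed circuit Y₁ ∈ 𝒞 with e ∈ Y̲₁ and Y̲₁ − {e} ⊆ Y̲₀, then there exists a signed circuit Y ∈ 𝒞 with Y⁻ = {e} and Y⁺ ⊆ Y̲₀. -/
import Mathlib


open Finset

/-- The support of a signed subset `X = (X⁺, X⁻)`. -/
def supp {α : Type} [DecidableEq α] (X : Finset α × Finset α) : Finset α := X.1 ∪ X.2

/-- An oriented matroid on ground set `α`, given by its collection of signed circuits,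
satisfying the signed circuit axioms (C1)-(C4). -/
structure OM (α : Type) [DecidableEq α] where
  C : Set (Finset α × Finset α)
  disj : ∀ X ∈ C, Disjoint X.1 X.2
  not_empty_mem : ((∅ : Finset α), (∅ : Finset α)) ∉ C
  neg_mem : ∀ X ∈ C, (X.2, X.1) ∈ C
  incomp : ∀ X ∈ C, ∀ Y ∈ C, supp X ⊆ supp Y → X = Y ∨ X = (Y.2, Y.1)
  elimAx : ∀ X ∈ C, ∀ Y ∈ C, X ≠ Y → X ≠ (Y.2, Y.1) → ∀ e ∈ X.1 ∩ Y.2,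
    ∃ Z ∈ C, Z.1 ⊆ (X.1 ∪ Y.1).erase e ∧ Z.2 ⊆ (X.2 ∪ Y.2).erase e

/-- A collection of signed subsets is acyclic if it contains no positive member. -/
def Acyclic {α : Type} (C : Set (Finset α × Finset α)) : Prop :=
  ∀ X ∈ C, X.2 ≠ ∅

/-- Reorientation of a signed subset by `A`. -/
def reorient {α : Type} [DecidableEq α] (A : Finset α) (X : Finset α × Finset α) :
    Finset α × Finset α :=
  ((X.1 \ A) ∪ (X.2 ∩ A), (X.2 \ A) ∪ (X.1 ∩ A))

/-- Reorientation of a collection of signed subsets by `A`. -/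
def reorientC {α : Type} [DecidableEq α] (A : Finset α)
    (C : Set (Finset α × Finset α)) : Set (Finset α × Finset α) :=
  reorient A '' C

/-- Deletion: keep the members whose support avoids `D`. -/
def delC {α : Type} [DecidableEq α] (D : Finset α)
    (C : Set (Finset α × Finset α)) : Set (Finset α × Finset α) :=
  {X ∈ C | Disjoint (supp X) D}

/-- The pre-circuits of the contraction by `T`. -/
def contrPre {α : Type} [DecidableEq α] (T : Finset α)
    (C : Set (Finset α × Finset α)) : Set (Finset α × Finset α) :=
  {Z | ∃ Y ∈ C, supp Y \ T ≠ ∅ ∧ Z = (Y.1 \ T, Y.2 \ T)}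

/-- Contraction: the support-inclusion-minimal members of `contrPre T C`. -/
def contrC {α : Type} [DecidableEq α] (T : Finset α)
    (C : Set (Finset α × Finset α)) : Set (Finset α × Finset α) :=
  {Z ∈ contrPre T C | ∀ W ∈ contrPre T C, supp W ⊆ supp Z → supp W = supp Z}

/-- `N` is an NBC subset of the underlying matroid of `M`: it contains no
broken circuit, i.e. no circuit of the underlying matroid with its maximal
element deleted. -/
def IsNBC {α : Type} [DecidableEq α] [LinearOrder α] (M : OM α) (N : Finset α) : Prop :=
  ∀ X ∈ M.C, ∀ h : (supp X).Nonempty, ¬ (supp X).erase ((supp X).max' h) ⊆ N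


private lemma aux_stmt11 {α : Type} [DecidableEq α] (M : OM α) (Y0 : Finset α)
    (hY0 : ((Y0, (∅ : Finset α)) : Finset α × Finset α) ∈ M.C)
    (e : α) (he : e ∉ Y0) :
    ∀ n : ℕ, ∀ Y1 ∈ M.C, e ∈ Y1.2 → supp Y1 \ {e} ⊆ Y0 → (Y1.2 \ {e}).card ≤ n →
      ∃ Y ∈ M.C, Y.2 = {e} ∧ Y.1 ⊆ Y0 := by
  intro n
  induction n with
  | zero =>
    intro Y1 hY1 heY1 hsub hcard
    have hempty : Y1.2 \ {e} = ∅ := Finset.card_eq_zero.mp (Nat.le_zero.mp hcard)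
    have h2 : Y1.2 = {e} := by
      apply Finset.Subset.antisymm
      · intro x hx
        by_contra hxe
        have : x ∈ Y1.2 \ {e} := Finset.mem_sdiff.mpr ⟨hx, by simpa using hxe⟩
        simp [hempty] at this
      · simpa using heY1
    refine ⟨Y1, hY1, h2, ?_⟩
    intro x hx
    have hxe : x ≠ e := by
      intro h'; subst h'
      exact Finset.disjoint_left.mp (M.disj Y1 hY1) hx heY1
    exact hsub (Finset.mem_sdiff.mpr ⟨Finset.mem_union_left _ hx, by simpa using hxe⟩)
  | succ n ih =>
    intro Y1 hY1 heY1 hsub hcard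
    by_cases hY2 : Y1.2 \ {e} = ∅
    · exact ih Y1 hY1 heY1 hsub (by simp [hY2])
    · obtain ⟨f, hf⟩ := Finset.nonempty_iff_ne_empty.mpr hY2
      have hfY2 : f ∈ Y1.2 := (Finset.mem_sdiff.mp hf).1
      have hfe : f ≠ e := by simpa using (Finset.mem_sdiff.mp hf).2
      have hfY0 : f ∈ Y0 :=
        hsub (Finset.mem_sdiff.mpr ⟨Finset.mem_union_right _ hfY2, by simpa using hfe⟩)
      have heY11 : e ∉ Y1.1 := fun h' =>
        Finset.disjoint_left.mp (M.disj Y1 hY1) h' heY1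
      have hne1 : ((Y0, (∅ : Finset α)) : Finset α × Finset α) ≠ Y1 := by
        intro h'
        have := congrArg Prod.snd h'
        simp only at this
        rw [← this] at heY1
        simp at heY1
      have hne2 : ((Y0, (∅ : Finset α)) : Finset α × Finset α) ≠ (Y1.2, Y1.1) := by
        intro h'
        have := congrArg Prod.fst h'
        simp only at this
        exact he (this ▸ heY1)
      obtain ⟨Z, hZ, hZ1, hZ2⟩ := M.elimAx _ hY0 _ hY1 hne1 hne2 f
        (Finset.mem_inter.mpr ⟨hfY0, hfY2⟩)
      simp only [Finset.empty_union] at hZ2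
      have heZ1 : e ∉ Z.1 := by
        intro h'
        have := hZ1 h'
        rcases Finset.mem_union.mp (Finset.mem_of_mem_erase this) with h | h
        · exact he h
        · exact heY11 h
      have hsuppZ : supp Z \ {e} ⊆ Y0 := by
        intro x hx
        obtain ⟨hx1, hx2⟩ := Finset.mem_sdiff.mp hx
        have hxe : x ≠ e := by simpa using hx2
        rcases Finset.mem_union.mp hx1 with h' | h'
        · rcases Finset.mem_union.mp (Finset.mem_of_mem_erase (hZ1 h')) with h'' | h''
          · exact h''
          · exact hsub (Finset.mem_sdiff.mpr
              ⟨Finset.mem_union_left _ h'', by simpa using hxe⟩)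
        · have := Finset.mem_of_mem_erase (hZ2 h')
          exact hsub (Finset.mem_sdiff.mpr
            ⟨Finset.mem_union_right _ this, by simpa using hxe⟩)
      have heZ2 : e ∈ Z.2 := by
        by_contra heZ2
        have hss : supp Z ⊆ supp ((Y0, (∅ : Finset α)) : Finset α × Finset α) := by
          intro x hx
          have hxe : x ≠ e := by
            rintro rfl
            rcases Finset.mem_union.mp hx with h' | h'
            · exact heZ1 h'
            · exact heZ2 h'
          have : x ∈ Y0 := hsuppZ (Finset.mem_sdiff.mpr ⟨hx, by simpa using hxe⟩)
          simpa [supp] using this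
        rcases M.incomp Z hZ _ hY0 hss with h' | h'
        · have : f ∈ Z.1 := by rw [h']; exact hfY0
          exact Finset.notMem_erase f _ (hZ1 this)
        · have : f ∈ Z.2 := by rw [h']; exact hfY0
          exact Finset.notMem_erase f _ (hZ2 this)
      apply ih Z hZ heZ2 hsuppZ
      have hsub2 : Z.2 \ {e} ⊆ (Y1.2 \ {e}).erase f := by
        intro x hx
        obtain ⟨hx1, hx2⟩ := Finset.mem_sdiff.mp hx
        have := hZ2 hx1
        exact Finset.mem_erase.mpr ⟨(Finset.mem_erase.mp this).1,
          Finset.mem_sdiff.mpr ⟨(Finset.mem_erase.mp this).2, hx2⟩⟩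
      calc (Z.2 \ {e}).card ≤ ((Y1.2 \ {e}).erase f).card := Finset.card_le_card hsub2
        _ = (Y1.2 \ {e}).card - 1 := Finset.card_erase_of_mem hf
        _ ≤ n := by omega

/-- If `(Y̲₀, ∅)` is a positive circuit of `M`, `e ∉ Y̲₀`, and some signed circuit `Y₁`
of `M` satisfies `e ∈ Y̲₁` and `Y̲₁ − {e} ⊆ Y̲₀`, then `M` has a signed circuit `Y`
with `Y⁻ = {e}` and `Y⁺ ⊆ Y̲₀`. -/
theorem stmt_11 {α : Type} [DecidableEq α] (M : OM α)
    (Y0 : Finset α) (hY0 : ((Y0, (∅ : Finset α)) : Finset α × Finset α) ∈ M.C)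
    (e : α) (he : e ∉ Y0)
    (h : ∃ Y1 ∈ M.C, e ∈ supp Y1 ∧ supp Y1 \ {e} ⊆ Y0) :
    ∃ Y ∈ M.C, Y.2 = {e} ∧ Y.1 ⊆ Y0 := by
  obtain ⟨Y1, hY1, heS, hsub⟩ := h
  rcases Finset.mem_union.mp heS with h1 | h2
  · exact aux_stmt11 M Y0 hY0 e he _ (Y1.2, Y1.1) (M.neg_mem Y1 hY1) h1
      (by simpa [supp, Finset.union_comm] using hsub) le_rfl
  · exact aux_stmt11 M Y0 hY0 e he _ Y1 hY1 h2 hsub le_rfl
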